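/- For any real matrix B of rank r and any matrix A_k of rank at most k (k ≤ r), the Frobenius approximation error satisfies ‖B − A_k‖_F² ≥ Σ_{i=k+1}^r σᵢ(B)², where σᵢ(B) are the singular values of B in descending order. In particular, the truncated SVD achieves the minimal rank-k Frobenius approximation error (Eckart–Young–Mirsky theorem for the Frobenius norm). -/

import Mathlib

noncomputable def frobNorm {m n : ℕ} (A : Matrix (Fin m) (Fin n) ℝ) : ℝ :=
  Real.sqrt (∑ i, ∑ j, (A i j) ^ 2)

theorem Matrix.isHermitian_transpose_mul_self {m n α : Type*} [CommSemiring α] [StarRing α]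
    [TrivialStar α] [Fintype m] (A : Matrix m n α) : (A.transpose * A).IsHermitian := by
  rw [Matrix.IsHermitian, Matrix.conjTranspose_eq_transpose_of_trivial, Matrix.transpose_mul,
    Matrix.transpose_transpose]

/-- The `k`-th largest singular value (0-indexed, so `sv B k = σ_{k+1}(B)`), 0 if `k ≥ n`. -/
noncomputable def sv {m n : ℕ} (B : Matrix (Fin m) (Fin n) ℝ) (k : ℕ) : ℝ :=
  if h : k < n then
    Real.sqrt (((Matrix.isHermitian_transpose_mul_self B).eigenvalues ∘
      Tuple.sort ((Matrix.isHermitian_transpose_mul_self B).eigenvalues)) (Fin.rev ⟨k, h⟩))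
  else 0

open Matrix Finset

lemma frob_sq {m n : ℕ} (M : Matrix (Fin m) (Fin n) ℝ) :
    frobNorm M ^ 2 = Matrix.trace (Mᵀ * M) := by
  have h0 : (0:ℝ) ≤ ∑ i, ∑ j, (M i j)^2 := by positivity
  rw [frobNorm, Real.sq_sqrt h0, Matrix.trace]
  simp only [Matrix.diag_apply, Matrix.mul_apply, Matrix.transpose_apply]
  rw [Finset.sum_comm]
  simp [sq]

lemma trace_tmul_nonneg {m n : ℕ} (M : Matrix (Fin m) (Fin n) ℝ) :
    0 ≤ Matrix.trace (Mᵀ * M) := by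
  rw [← frob_sq]; positivity

lemma count_ite {n c : ℕ} (hc : c ≤ n) :
    ∑ i : Fin n, (if (i:ℕ) < c then (1:ℝ) else 0) = c := by
  rw [Fin.sum_univ_eq_sum_range (fun j => if j < c then (1:ℝ) else 0),
    Finset.range_eq_Ico, ← Finset.sum_Ico_consecutive _ (Nat.zero_le c) hc,
    Finset.sum_congr rfl (fun j hj => if_pos (Finset.mem_Ico.mp hj).2),
    Finset.sum_congr rfl (fun j hj => if_neg (by have := (Finset.mem_Ico.mp hj).1; omega))]
  simp

lemma key_sum_ineq {n : ℕ} (g t : Fin n → ℝ) (hg : Monotone g) (hg0 : ∀ i, 0 ≤ g i)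
    (ht0 : ∀ i, 0 ≤ t i) (ht1 : ∀ i, t i ≤ 1) (c : ℕ) (hc : c ≤ n)
    (hsum : (c:ℝ) ≤ ∑ i, t i) :
    ∑ i : Fin n, (if (i:ℕ) < c then g i else 0) ≤ ∑ i, g i * t i := by
  rcases Nat.eq_zero_or_pos c with h0 | hcpos
  · subst h0; simp
    exact Finset.sum_nonneg fun i _ => mul_nonneg (hg0 i) (ht0 i)
  · set γ := g ⟨c-1, by omega⟩ with hγ
    have hγ0 : 0 ≤ γ := hg0 _
    have key : ∀ i : Fin n,
        γ * (t i - if (i:ℕ) < c then 1 else 0) ≤ g i * t i - (if (i:ℕ) < c then g i else 0) := by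
      intro i
      by_cases h : (i:ℕ) < c
      · simp only [if_pos h]
        have hgi : g i ≤ γ := hg (by simp [Fin.le_def]; omega)
        nlinarith [ht1 i, ht0 i, hg0 i]
      · simp only [if_neg h]
        have hgi : γ ≤ g i := hg (by simp [Fin.le_def]; omega)
        nlinarith [ht0 i]
    have hs := Finset.sum_le_sum (fun i (_ : i ∈ Finset.univ) => key i)
    rw [← Finset.mul_sum, Finset.sum_sub_distrib, Finset.sum_sub_distrib, count_ite hc] at hs
    nlinarith [mul_nonneg hγ0 (sub_nonneg.mpr hsum)]

lemma monotone_zero_below {n r : ℕ} (g : Fin n → ℝ) (hg : Monotone g) (hg0 : ∀ i, 0 ≤ g i)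
    (hcard : Fintype.card {i // g i ≠ 0} = r) {j : Fin n} (hj : (j:ℕ) < n - r) : g j = 0 := by
  by_contra hne
  have hpos : 0 < g j := lt_of_le_of_ne (hg0 j) (Ne.symm hne)
  have hsub : ∀ i : Fin n, (j:ℕ) ≤ (i:ℕ) → g i ≠ 0 := fun i hi =>
    ne_of_gt (lt_of_lt_of_le hpos (hg (show j ≤ i from hi)))
  have hinj : Function.Injective
      (fun x : Fin (n - (j:ℕ)) => (⟨⟨(j:ℕ) + x, by omega⟩,
        hsub _ (Nat.le_add_right _ _)⟩ : {i // g i ≠ 0})) := by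
    intro a b h
    have := congrArg (fun z : {i // g i ≠ 0} => (z.1 : ℕ)) h
    simp at this
    exact Fin.ext this
  have := Fintype.card_le_of_injective _ hinj
  simp [hcard] at this
  omega

lemma trace_proj {m n : ℕ} (M : Matrix (Fin m) (Fin n) ℝ) (P : Matrix (Fin n) (Fin n) ℝ)
    (hPT : Pᵀ = P) (hPP : P * P = P) :
    Matrix.trace ((M * P)ᵀ * (M * P)) = Matrix.trace ((Mᵀ * M) * P) := by
  rw [Matrix.transpose_mul, hPT, Matrix.mul_assoc, Matrix.trace_mul_comm,
    Matrix.mul_assoc, Matrix.mul_assoc, hPP, ← Matrix.mul_assoc]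

lemma master {m n : ℕ} (B : Matrix (Fin m) (Fin n) ℝ) (g : Fin n → ℝ)
    (W : Matrix (Fin n) (Fin n) ℝ) (hW1 : Wᵀ * W = 1) (hW2 : W * Wᵀ = 1)
    (hdec : Bᵀ * B = W * Matrix.diagonal g * Wᵀ)
    (hgmono : Monotone g) (hg0 : ∀ i, 0 ≤ g i)
    (k : ℕ) (hkn : k ≤ n) :
    (∀ A : Matrix (Fin m) (Fin n) ℝ, A.rank ≤ k →
        (∑ i : Fin n, if (i:ℕ) < n - k then g i else 0) ≤ frobNorm (B - A) ^ 2) ∧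
    (∃ A : Matrix (Fin m) (Fin n) ℝ, A.rank ≤ k ∧
        frobNorm (B - A) ^ 2 = ∑ i : Fin n, if (i:ℕ) < n - k then g i else 0) := by
  classical
  have hWW : ∀ {p : ℕ} (X : Matrix (Fin n) (Fin p) ℝ), Wᵀ * (W * X) = X := by
    intro p X; rw [← Matrix.mul_assoc, hW1, Matrix.one_mul]
  constructor
  · -- lower bound
    intro A hA
    set e := WithLp.linearEquiv 2 ℝ (Fin n → ℝ)
    set K0 := LinearMap.ker A.mulVecLin with hK0
    set K : Submodule ℝ (EuclideanSpace ℝ (Fin n)) :=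
      K0.map (e.symm : (Fin n → ℝ) →ₗ[ℝ] EuclideanSpace ℝ (Fin n)) with hK
    have hKK0 : Module.finrank ℝ K = Module.finrank ℝ K0 := LinearEquiv.finrank_map_eq _ _
    have hq : Module.finrank ℝ K0 + A.rank = n := by
      have h2 := LinearMap.finrank_range_add_finrank_ker A.mulVecLin
      rw [hK0, Matrix.rank]
      simp only [Module.finrank_pi, Fintype.card_fin] at h2
      omega
    set b := stdOrthonormalBasis ℝ K with hb
    set Y : Matrix (Fin n) (Fin (Module.finrank ℝ ↥K)) ℝ :=
      fun a j => (b j : EuclideanSpace ℝ (Fin n)) a with hY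
    have hY1 : Yᵀ * Y = 1 := by
      ext i j
      have hbij := orthonormal_iff_ite.mp b.orthonormal i j
      rw [Submodule.coe_inner, PiLp.inner_apply] at hbij
      simp only [RCLike.inner_apply, starRingEnd_apply, star_trivial] at hbij
      simp only [Matrix.mul_apply, Matrix.transpose_apply, Matrix.one_apply, hY]
      rw [← hbij]
      show ∑ x, (b i : EuclideanSpace ℝ (Fin n)) x * (b j : EuclideanSpace ℝ (Fin n)) x = _
      exact Finset.sum_congr rfl fun x _ => mul_comm _ _
    have hAY : A * Y = 0 := by
      ext a j
      obtain ⟨y, hy, hyeq⟩ := Submodule.mem_map.mp (b j).2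
      have hfun : (fun c => Y c j) = y := by
        funext c
        rw [hY]
        simp only
        rw [← hyeq]
        rfl
      simp only [Matrix.mul_apply, Matrix.zero_apply]
      have hz : A.mulVec (fun c => Y c j) = 0 := by rw [hfun]; exact hy
      have := congrFun hz a
      simpa [Matrix.mulVec, dotProduct] using this
    set P := Y * Yᵀ with hP
    have hPT : Pᵀ = P := by
      rw [hP, Matrix.transpose_mul, Matrix.transpose_transpose]
    have hPP : P * P = P := by
      rw [hP, Matrix.mul_assoc, ← Matrix.mul_assoc Yᵀ Y, hY1, Matrix.one_mul]
    have hAP : A * P = 0 := by rw [hP, ← Matrix.mul_assoc, hAY, Matrix.zero_mul]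
    have htrP : Matrix.trace P = (Module.finrank ℝ ↥K : ℝ) := by
      rw [hP, Matrix.trace_mul_comm, hY1, Matrix.trace_one]
      simp
    set M := B - A with hM
    have hMP : M * P = B * P := by rw [hM, Matrix.sub_mul, hAP, sub_zero]
    set Q := Wᵀ * (P * W) with hQ
    have hQT : Qᵀ = Q := by
      rw [hQ]
      simp only [Matrix.transpose_mul, Matrix.transpose_transpose, hPT, Matrix.mul_assoc]
    have hQQ : Q * Q = Q := by
      rw [hQ]
      simp only [Matrix.mul_assoc]
      rw [← Matrix.mul_assoc W Wᵀ, hW2, Matrix.one_mul, ← Matrix.mul_assoc P P, hPP]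
    have hQsym : ∀ i j, Q j i = Q i j := by
      intro i j
      have := congrFun (congrFun hQT i) j
      rw [Matrix.transpose_apply] at this
      exact this
    have hQsq : ∀ i, Q i i = ∑ j, (Q i j)^2 := by
      intro i
      conv_lhs => rw [← hQQ]
      rw [Matrix.mul_apply]
      exact Finset.sum_congr rfl fun j _ => by rw [hQsym i j]; ring
    have ht0 : ∀ i, 0 ≤ Q i i := by intro i; rw [hQsq i]; positivity
    have ht1 : ∀ i, Q i i ≤ 1 := by
      intro i
      have h := Finset.single_le_sum (f := fun j => (Q i j)^2)
        (fun j _ => sq_nonneg _) (Finset.mem_univ i)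
      rw [← hQsq i] at h
      have h' : Q i i ^ 2 ≤ Q i i := h
      nlinarith [ht0 i]
    have hsumt : ((n - k : ℕ) : ℝ) ≤ ∑ i, Q i i := by
      have htrQ : ∑ i, Q i i = Matrix.trace P := by
        rw [show ∑ i, Q i i = Matrix.trace Q from rfl, hQ, Matrix.trace_mul_comm,
          Matrix.mul_assoc, hW2, Matrix.mul_one]
      rw [htrQ, htrP, hKK0]
      have : n - k ≤ Module.finrank ℝ ↥K0 := by omega
      exact_mod_cast Nat.cast_le.mpr this
    have hkey := key_sum_ineq g (fun i => Q i i) hgmono hg0 ht0 ht1 (n - k) (by omega) hsumt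
    -- trace chain
    rw [frob_sq]
    have step2 : Matrix.trace ((Mᵀ * M) * P) = ∑ i, g i * Q i i := by
      rw [← trace_proj M P hPT hPP, hMP, trace_proj B P hPT hPP, hdec]
      simp only [Matrix.mul_assoc]
      rw [Matrix.trace_mul_comm]
      simp only [Matrix.mul_assoc]
      rw [Matrix.trace]
      apply Finset.sum_congr rfl
      intro i _
      rw [Matrix.diag_apply, Matrix.diagonal_mul]
    have step1 : Matrix.trace ((Mᵀ * M) * P) ≤ Matrix.trace (Mᵀ * M) := by
      have h6 : (1 - P)ᵀ = 1 - P := by rw [Matrix.transpose_sub, Matrix.transpose_one, hPT]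
      have h7 : (1 - P) * (1 - P) = 1 - P := by
        rw [Matrix.sub_mul, Matrix.one_mul, Matrix.mul_sub, Matrix.mul_one, hPP]
        abel
      have h8 := trace_proj M (1 - P) h6 h7
      have h9 := trace_tmul_nonneg (M * (1 - P))
      rw [h8, Matrix.mul_sub, Matrix.mul_one, Matrix.trace_sub] at h9
      linarith
    calc ∑ i : Fin n, (if (i:ℕ) < n - k then g i else 0)
        ≤ ∑ i, g i * Q i i := hkey
      _ = Matrix.trace ((Mᵀ * M) * P) := step2.symm
      _ ≤ Matrix.trace (Mᵀ * M) := step1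

  · -- existence: truncated SVD
    set d : Fin n → ℝ := fun i => if (i:ℕ) < n - k then 0 else 1 with hd
    set d' : Fin n → ℝ := fun i => if (i:ℕ) < n - k then 1 else 0 with hd'
    set A := B * (W * Matrix.diagonal d * Wᵀ) with hA
    have hrank : A.rank ≤ k := by
      have h1 : A.rank ≤ (Matrix.diagonal d).rank := by
        calc A.rank = ((B * W * Matrix.diagonal d) * Wᵀ).rank := by
              rw [hA]; congr 1; simp only [Matrix.mul_assoc]
          _ ≤ (B * W * Matrix.diagonal d).rank := Matrix.rank_mul_le_left _ _
          _ ≤ (Matrix.diagonal d).rank := Matrix.rank_mul_le_right _ _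
      refine h1.trans ?_
      rw [Matrix.rank_diagonal]
      have hinj : Function.Injective (fun x : {i : Fin n // d i ≠ 0} =>
          (⟨(x.1 : ℕ) - (n - k), by
            have hx := x.2
            by_contra hc
            simp only [hd] at hx
            have : ¬ ((x.1 : ℕ) < n - k) := fun hlt => hx (if_pos hlt)
            have hxn := x.1.2
            omega⟩ : Fin k)) := by
        intro a b h
        have ha : ¬ ((a.1 : ℕ) < n - k) := fun hlt => a.2 (by simp [hd, hlt])
        have hb : ¬ ((b.1 : ℕ) < n - k) := fun hlt => b.2 (by simp [hd, hlt])
        have := congrArg Fin.val h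
        simp only at this
        exact Subtype.ext (Fin.ext (by omega))
      simpa using Fintype.card_le_of_injective _ hinj
    refine ⟨A, hrank, ?_⟩
    have hdd : Matrix.diagonal d' + Matrix.diagonal d = 1 := by
      rw [Matrix.diagonal_add, ← Matrix.diagonal_one]
      refine congrArg Matrix.diagonal ?_; funext i; simp only [hd, hd']; split <;> norm_num
    have hBA : B - A = B * W * Matrix.diagonal d' * Wᵀ := by
      have h1 : W * Matrix.diagonal d' * Wᵀ + W * Matrix.diagonal d * Wᵀ = 1 := by
        rw [← Matrix.add_mul, ← Matrix.mul_add, hdd, Matrix.mul_one, hW2]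
      calc B - A = B * (W * Matrix.diagonal d' * Wᵀ + W * Matrix.diagonal d * Wᵀ)
            - B * (W * Matrix.diagonal d * Wᵀ) := by rw [h1, Matrix.mul_one, hA]
        _ = B * (W * Matrix.diagonal d' * Wᵀ) := by rw [Matrix.mul_add]; abel
        _ = B * W * Matrix.diagonal d' * Wᵀ := by simp only [Matrix.mul_assoc]
    rw [frob_sq, hBA]
    have hT : (B * W * Matrix.diagonal d' * Wᵀ)ᵀ * (B * W * Matrix.diagonal d' * Wᵀ)
        = W * (Matrix.diagonal d' * (Matrix.diagonal g * (Matrix.diagonal d' * Wᵀ))) := by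
      simp only [Matrix.transpose_mul, Matrix.transpose_transpose, Matrix.diagonal_transpose,
        Matrix.mul_assoc]
      rw [← Matrix.mul_assoc Bᵀ B, hdec]
      simp only [Matrix.mul_assoc]
      rw [hWW, hWW]
    rw [hT, Matrix.trace_mul_comm]
    simp only [Matrix.mul_assoc]
    rw [hW1, Matrix.mul_one, Matrix.diagonal_mul_diagonal, Matrix.diagonal_mul_diagonal,
      Matrix.trace_diagonal]
    apply Finset.sum_congr rfl
    intro i _
    simp only [hd']
    split <;> ring

lemma star_eq_transpose {n p : ℕ} (M : Matrix (Fin n) (Fin p) ℝ) : Mᴴ = Mᵀ := by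
  ext i j; simp [Matrix.conjTranspose_apply]

lemma exists_W {m n : ℕ} (B : Matrix (Fin m) (Fin n) ℝ) :
    ∃ W : Matrix (Fin n) (Fin n) ℝ, Wᵀ * W = 1 ∧ W * Wᵀ = 1 ∧
      Bᵀ * B = W * Matrix.diagonal ((Matrix.isHermitian_transpose_mul_self B).eigenvalues ∘
        ⇑(Tuple.sort (Matrix.isHermitian_transpose_mul_self B).eigenvalues)) * Wᵀ := by
  classical
  set hH := Matrix.isHermitian_transpose_mul_self B with hHdef
  set μ := hH.eigenvalues with hμ
  set e := Tuple.sort μ with he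
  set V : Matrix (Fin n) (Fin n) ℝ := (hH.eigenvectorUnitary : Matrix (Fin n) (Fin n) ℝ) with hV
  have hV1 : Vᵀ * V = 1 := by
    have h : Vᴴ * V = 1 := Matrix.mem_unitaryGroup_iff'.mp hH.eigenvectorUnitary.2
    rwa [star_eq_transpose] at h
  have hV2 : V * Vᵀ = 1 := by
    have h : V * Vᴴ = 1 := Matrix.mem_unitaryGroup_iff.mp hH.eigenvectorUnitary.2
    rwa [star_eq_transpose] at h
  have hof : (RCLike.ofReal ∘ μ : Fin n → ℝ) = μ := by funext i; simp
  have hspec : Bᵀ * B = V * Matrix.diagonal μ * Vᵀ := by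
    calc Bᵀ * B = Bᴴ * B := by rw [← star_eq_transpose B]
      _ = V * Matrix.diagonal (RCLike.ofReal ∘ μ) * Vᴴ := by
        rw [star_eq_transpose B]
        exact hH.spectral_theorem.trans (Unitary.conjStarAlgAut_apply _ _)
      _ = V * Matrix.diagonal μ * Vᵀ := by rw [hof, star_eq_transpose]
  refine ⟨V.submatrix id ⇑e, ?_, ?_, ?_⟩
  · rw [Matrix.transpose_submatrix]
    have h2 : Vᵀ.submatrix ⇑e id = Vᵀ.submatrix ⇑e ⇑(Equiv.refl (Fin n)) := by
      rw [Equiv.coe_refl]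
    have h3 : V.submatrix id ⇑e = V.submatrix ⇑(Equiv.refl (Fin n)) ⇑e := by
      rw [Equiv.coe_refl]
    rw [h2, h3, Matrix.submatrix_mul_equiv, hV1, Matrix.submatrix_one_equiv]
  · rw [Matrix.transpose_submatrix, Matrix.submatrix_mul_equiv, hV2, Matrix.submatrix_id_id]
  · rw [hspec, Matrix.transpose_submatrix, ← Matrix.submatrix_diagonal μ ⇑e e.injective,
      Matrix.submatrix_mul_equiv V (Matrix.diagonal μ) id e ⇑e,
      Matrix.submatrix_mul_equiv (V * Matrix.diagonal μ) Vᵀ id e id,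
      Matrix.submatrix_id_id]

/-- Eckart–Young–Mirsky theorem for the Frobenius norm: any matrix `A` of rank at most `k`
satisfies `‖B − A‖_F² ≥ Σ_{i=k+1}^r σᵢ(B)²`, and some matrix of rank at most `k`
(namely the truncated SVD) achieves this bound. -/
theorem eckart_young_mirsky_frobenius {m n : ℕ} (B : Matrix (Fin m) (Fin n) ℝ)
    (k : ℕ) (hk : k ≤ B.rank) :
    (∀ A : Matrix (Fin m) (Fin n) ℝ, A.rank ≤ k →
        frobNorm (B - A) ^ 2 ≥ ∑ i ∈ Finset.Ico k B.rank, sv B i ^ 2) ∧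
    (∃ A : Matrix (Fin m) (Fin n) ℝ, A.rank ≤ k ∧
        frobNorm (B - A) ^ 2 = ∑ i ∈ Finset.Ico k B.rank, sv B i ^ 2) := by
  classical
  set g : Fin n → ℝ := (Matrix.isHermitian_transpose_mul_self B).eigenvalues ∘
      ⇑(Tuple.sort ((Matrix.isHermitian_transpose_mul_self B).eigenvalues)) with hgdef
  obtain ⟨W, hW1, hW2, hdec⟩ := exists_W B
  rw [← hgdef] at hdec
  have hrn : B.rank ≤ n := Matrix.rank_le_width B
  have hkn : k ≤ n := hk.trans hrn
  have hgmono : Monotone g := Tuple.monotone_sort _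
  have hg0 : ∀ i, 0 ≤ g i := fun i =>
    Matrix.eigenvalues_conjTranspose_mul_self_nonneg B _
  have hcard : Fintype.card {i // g i ≠ 0} = B.rank := by
    have h1 : (Bᴴ * B).rank = B.rank := by
      rw [star_eq_transpose B]; exact Matrix.rank_transpose_mul_self B
    have h2 := (Matrix.isHermitian_transpose_mul_self B).rank_eq_card_non_zero_eigs
    have h3 : Fintype.card {i // g i ≠ 0} =
        Fintype.card {i // (Matrix.isHermitian_transpose_mul_self B).eigenvalues i ≠ 0} :=
      Fintype.card_congr ((Tuple.sort _).subtypeEquiv fun a => Iff.rfl)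
    rw [h3, ← h2, ← h1, star_eq_transpose]
  have hzero : ∀ j : Fin n, (j:ℕ) < n - B.rank → g j = 0 := fun j hj =>
    monotone_zero_below g hgmono hg0 hcard hj
  set F : ℕ → ℝ := fun j => if h : j < n then g ⟨j, h⟩ else 0 with hF
  -- transfer: sum of sv² over Ico k rank equals the Fin-indexed truncated sum
  have key : ∑ i ∈ Finset.Ico k B.rank, sv B i ^ 2
      = ∑ j ∈ Finset.Ico (n - B.rank) (n - k), F j := by
    refine Finset.sum_nbij' (fun i => n - (i+1)) (fun j => n - (j+1)) ?_ ?_ ?_ ?_ ?_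
    · intro a ha; have h := Finset.mem_Ico.mp ha; rw [Finset.mem_Ico]; omega
    · intro a ha; have h := Finset.mem_Ico.mp ha; rw [Finset.mem_Ico]; omega
    · intro a ha; have h := Finset.mem_Ico.mp ha; omega
    · intro a ha; have h := Finset.mem_Ico.mp ha; omega
    · intro i hi
      have hik := Finset.mem_Ico.mp hi
      have hin : (i : ℕ) < n := lt_of_lt_of_le hik.2 hrn
      have hjn : n - (i+1) < n := by omega
      have hFj : F (n - (i+1)) = g ⟨n - (i+1), hjn⟩ := by
        simp only [hF]; rw [dif_pos hjn]
      have hsv : sv B i = Real.sqrt (g (Fin.rev ⟨i, hin⟩)) := by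
        unfold sv; rw [dif_pos hin]
      rw [hsv, Real.sq_sqrt (hg0 _), hFj]
      have hrev : Fin.rev ⟨i, hin⟩ = (⟨n - (i+1), hjn⟩ : Fin n) := Fin.ext (by simp [Fin.val_rev])
      rw [hrev]
  have split1 : ∑ j ∈ Finset.Ico 0 (n - B.rank), F j
      + ∑ j ∈ Finset.Ico (n - B.rank) (n - k), F j
      = ∑ j ∈ Finset.Ico 0 (n - k), F j :=
    Finset.sum_Ico_consecutive F (by omega) (by omega)
  have z1 : ∑ j ∈ Finset.Ico 0 (n - B.rank), F j = 0 := by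
    refine Finset.sum_eq_zero fun j hj => ?_
    have hj2 := (Finset.mem_Ico.mp hj).2
    simp only [hF]
    by_cases hjn : j < n
    · rw [dif_pos hjn]; exact hzero ⟨j, hjn⟩ hj2
    · rw [dif_neg hjn]
  have keyR : (∑ i : Fin n, if (i:ℕ) < n - k then g i else 0)
      = ∑ j ∈ Finset.Ico 0 (n - k), F j := by
    have hGcoe : ∀ i : Fin n, (if (i:ℕ) < n - k then g i else 0)
        = (if (i:ℕ) < n - k then F (i:ℕ) else 0) := by
      intro i
      by_cases h : (i:ℕ) < n - k
      · rw [if_pos h, if_pos h]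
        simp only [hF]
        rw [dif_pos i.2, Fin.eta]
      · rw [if_neg h, if_neg h]
    rw [Finset.sum_congr rfl fun i _ => hGcoe i,
      Fin.sum_univ_eq_sum_range (fun j => if j < n - k then F j else 0) n,
      Finset.range_eq_Ico, ← Finset.sum_Ico_consecutive _ (Nat.zero_le (n-k)) (Nat.sub_le n k)]
    have e2 : ∑ j ∈ Finset.Ico (n-k) n, (if j < n - k then F j else 0) = 0 :=
      Finset.sum_eq_zero fun j hj => if_neg (by have := (Finset.mem_Ico.mp hj).1; omega)
    rw [e2, add_zero]
    exact Finset.sum_congr rfl fun j hj => if_pos ((Finset.mem_Ico.mp hj).2)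
  have htrans : ∑ i ∈ Finset.Ico k B.rank, sv B i ^ 2
      = ∑ i : Fin n, if (i:ℕ) < n - k then g i else 0 := by
    rw [key, keyR, ← split1, z1, zero_add]
  obtain ⟨hlow, hex⟩ := master B g W hW1 hW2 hdec hgmono hg0 k hkn
  constructor
  · intro A hA
    rw [ge_iff_le, htrans]
    exact hlow A hA
  · obtain ⟨A, hA1, hA2⟩ := hex
    exact ⟨A, hA1, by rw [htrans]; exact hA2⟩
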